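/- Let n, d, a₁, a₂, m be natural numbers with a₁ ≤ d ≤ n and a₂ ≤ n − d. Then for every real number x, ∑_{j=a₁+a₂}^{n−m} C(n−j, m)·C(d−a₁, j−a₁−a₂)·x^{n−j−m} = (1/m!)·(iteratedDeriv m f)(x), where f : ℝ → ℝ is the polynomial function f(x) = x^{n−d−a₂}·(1+x)^{d−a₁} and iteratedDeriv m f denotes its m-th derivative. -/

import Mathlib

open Polynomial Finset

private lemma iteratedDeriv_polynomial_eval (m : ℕ) (p : Polynomial ℝ) :
    iteratedDeriv m (fun y : ℝ => p.eval y)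
      = fun x : ℝ => ((Polynomial.derivative)^[m] p).eval x := by
  induction m generalizing p with
  | zero => simp
  | succ k ih =>
    rw [iteratedDeriv_succ']
    have hd : (deriv fun y : ℝ => p.eval y) = fun y : ℝ => (Polynomial.derivative p).eval y := by
      funext y; exact p.deriv
    rw [hd, ih, Function.iterate_succ_apply]

/-- **Van den Essen type formula, auxiliary identity.**
For natural numbers `n, d, a₁, a₂, m` with `a₁ ≤ d ≤ n` and `a₂ ≤ n - d`,
and every real `x`,
`∑_{j=a₁+a₂}^{n-m} C(n-j, m) · C(d-a₁, j-a₁-a₂) · x^(n-j-m)`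
equals `(1/m!) · (d^m/dx^m) [x^(n-d-a₂) (1+x)^(d-a₁)]`. -/
theorem sum_choose_eq_iteratedDeriv_phi
    (n d a₁ a₂ m : ℕ) (h₁ : a₁ ≤ d) (h₂ : d ≤ n) (h₃ : a₂ ≤ n - d) (x : ℝ) :
    ∑ j ∈ Finset.Icc (a₁ + a₂) (n - m),
      ((n - j).choose m : ℝ) * ((d - a₁).choose (j - a₁ - a₂) : ℝ) * x ^ (n - j - m)
    = (1 / (m.factorial : ℝ)) *
        iteratedDeriv m (fun y : ℝ => y ^ (n - d - a₂) * (1 + y) ^ (d - a₁)) x := by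
  set p := n - d - a₂ with hp
  set q := d - a₁ with hq
  have hf : (fun y : ℝ => y ^ p * (1 + y) ^ q)
      = fun y : ℝ => ((X : Polynomial ℝ) ^ p * (1 + X) ^ q).eval y := by
    funext y; simp
  rw [hf, iteratedDeriv_polynomial_eval]
  have hder : (Polynomial.derivative)^[m] ((X : Polynomial ℝ) ^ p * (1 + X) ^ q)
      = m.factorial • Polynomial.hasseDeriv m ((X : Polynomial ℝ) ^ p * (1 + X) ^ q) := by
    rw [← Polynomial.factorial_smul_hasseDeriv]
    simp
  rw [hder]
  beta_reduce
  have hfac : (m.factorial : ℝ) ≠ 0 := by positivity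
  rw [Polynomial.eval_smul, nsmul_eq_mul]
  rw [one_div, ← mul_assoc, inv_mul_cancel₀ hfac, one_mul]
  -- expand the polynomial
  have hP : ((X : Polynomial ℝ) ^ p * (1 + X) ^ q)
      = ∑ k ∈ range (q + 1), ((q.choose k : ℝ)) • (X : Polynomial ℝ) ^ (p + (q - k)) := by
    rw [add_pow, Finset.mul_sum]
    refine Finset.sum_congr rfl fun k hk => ?_
    rw [pow_add, Polynomial.smul_eq_C_mul]
    simp only [Polynomial.C_eq_natCast]
    ring
  have heval : (Polynomial.hasseDeriv m ((X : Polynomial ℝ) ^ p * (1 + X) ^ q)).eval x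
      = ∑ k ∈ range (q + 1),
          (q.choose k : ℝ) * (((p + (q - k)).choose m : ℝ) * x ^ (p + (q - k) - m)) := by
    rw [hP, map_sum, Polynomial.eval_finset_sum]
    refine Finset.sum_congr rfl fun k hk => ?_
    rw [map_smul, Polynomial.X_pow_eq_monomial, Polynomial.hasseDeriv_monomial]
    simp [mul_comm, mul_assoc]
  rw [heval]
  -- both sides equal a common padded sum
  have hpq : p + q = n - a₁ - a₂ := by omega
  have key : ∀ (s : ℕ), s ≥ p + q + 1 → True := fun _ _ => trivial
  -- RHS over range (q+1) equals sum of h over range (p+q+1)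
  set h : ℕ → ℝ := fun i => (q.choose i : ℝ) * (((p + q - i).choose m : ℝ) * x ^ (p + q - i - m))
    with hh
  have hRHS : ∑ k ∈ range (q + 1),
      (q.choose k : ℝ) * (((p + (q - k)).choose m : ℝ) * x ^ (p + (q - k) - m))
      = ∑ i ∈ range (p + q + 1), h i := by
    have e1 : ∑ k ∈ range (q + 1),
        (q.choose k : ℝ) * (((p + (q - k)).choose m : ℝ) * x ^ (p + (q - k) - m))
        = ∑ k ∈ range (q + 1), h k := by
      refine Finset.sum_congr rfl fun k hk => ?_
      rw [Finset.mem_range] at hk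
      have e : p + (q - k) = p + q - k := by omega
      rw [hh]; rw [e]
    rw [e1]
    refine Finset.sum_subset (Finset.range_subset_range.mpr (by omega)) fun i _ hi => ?_
    rw [Finset.mem_range, not_lt] at hi
    have : q.choose i = 0 := Nat.choose_eq_zero_of_lt (by omega)
    simp [hh, this]
  rw [hRHS]
  -- LHS
  rw [← Finset.Ico_add_one_right_eq_Icc, Finset.sum_Ico_eq_sum_range]
  have e2 : ∑ i ∈ range (n - m + 1 - (a₁ + a₂)),
      ((n - (a₁ + a₂ + i)).choose m : ℝ) * ((q.choose ((a₁ + a₂ + i) - a₁ - a₂)) : ℝ)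
        * x ^ (n - (a₁ + a₂ + i) - m)
      = ∑ i ∈ range (n - m + 1 - (a₁ + a₂)), h i := by
    refine Finset.sum_congr rfl fun i hi => ?_
    rw [Finset.mem_range] at hi
    have e3 : n - (a₁ + a₂ + i) = p + q - i := by omega
    have e4 : (a₁ + a₂ + i) - a₁ - a₂ = i := by omega
    rw [e3, e4, hh]
    ring
  rw [e2]
  refine Finset.sum_subset (Finset.range_subset_range.mpr (by omega)) fun i hbig hi => ?_
  rw [Finset.mem_range, not_lt] at hi
  rw [Finset.mem_range] at hbig
  have : (p + q - i).choose m = 0 := Nat.choose_eq_zero_of_lt (by omega)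
  simp [hh, this]
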